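/- Let Ω ⊆ ℝⁿ be an open set and let ρ : Ω → ℝ be a C² function which is 2-plurisubharmonic and bounded above on Ω. Then for every conformal harmonic map f : ℂ → ℝⁿ with f(ℂ) ⊆ Ω, the composition ρ ∘ f : ℂ → ℝ is constant. -/

import Mathlib

open RealInnerProductSpace

/-- The Hessian quadratic form of `ρ : ℝⁿ → ℝ` at `x`, evaluated on vectors `v, w`. -/
noncomputable def Hess {n : ℕ} (ρ : EuclideanSpace ℝ (Fin n) → ℝ)
    (x v w : EuclideanSpace ℝ (Fin n)) : ℝ :=
  fderiv ℝ (fun y => fderiv ℝ ρ y v) x w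

/-- A `C²` function `ρ` is `2`-plurisubharmonic on `Ω` if the trace of the restriction
of its Hessian to any `2`-dimensional linear subspace of `ℝⁿ` (given by an orthonormal
pair of vectors) is nonnegative at every point of `Ω`. -/
def Is2PSH {n : ℕ} (ρ : EuclideanSpace ℝ (Fin n) → ℝ)
    (Ω : Set (EuclideanSpace ℝ (Fin n))) : Prop :=
  ∀ x ∈ Ω, ∀ v : Fin 2 → EuclideanSpace ℝ (Fin n),
    Orthonormal ℝ v → 0 ≤ ∑ i, Hess ρ x (v i) (v i)

/-- A map `f : ℂ → ℝⁿ` is conformal harmonic if it is `C²`, its partial derivatives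
`f_x = Df·1` and `f_y = Df·i` satisfy `f_x · f_y = 0` and `|f_x| = |f_y|` at every
point (conformality), and `f_xx + f_yy = 0` (harmonicity). -/
def ConformalHarmonic {n : ℕ} (f : ℂ → EuclideanSpace ℝ (Fin n)) : Prop :=
  ContDiff ℝ 2 f ∧
  (∀ z : ℂ, ⟪fderiv ℝ f z 1, fderiv ℝ f z Complex.I⟫ = 0 ∧
      ‖fderiv ℝ f z 1‖ = ‖fderiv ℝ f z Complex.I‖) ∧
  (∀ z : ℂ, fderiv ℝ (fun w => fderiv ℝ f w 1) z 1
      + fderiv ℝ (fun w => fderiv ℝ f w Complex.I) z Complex.I = 0)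


open Filter Topology

/-- The Laplacian-like operator on `ℂ`. -/
noncomputable def Lap (u : ℂ → ℝ) (z : ℂ) : ℝ :=
  fderiv ℝ (fun w => fderiv ℝ u w 1) z 1
    + fderiv ℝ (fun w => fderiv ℝ u w Complex.I) z Complex.I

lemma eventually_contDiffAt {E F : Type*} [NormedAddCommGroup E] [NormedSpace ℝ E]
    [NormedAddCommGroup F] [NormedSpace ℝ F] {u : E → F} {z : E}
    (hu : ContDiffAt ℝ 2 u z) : ∀ᶠ w in 𝓝 z, ContDiffAt ℝ 2 u w := by
  obtain ⟨s, hs, hcd⟩ := hu.contDiffOn le_rfl (by simp)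
  obtain ⟨t, hts, ht, hzt⟩ := mem_nhds_iff.mp hs
  filter_upwards [ht.mem_nhds hzt] with w hw
  exact (hcd.mono hts).contDiffAt (ht.mem_nhds hw)

lemma diff_fderiv_apply {E F : Type*} [NormedAddCommGroup E] [NormedSpace ℝ E]
    [NormedAddCommGroup F] [NormedSpace ℝ F] {u : E → F} {z : E}
    (hu : ContDiffAt ℝ 2 u z) (v : E) :
    DifferentiableAt ℝ (fun w => fderiv ℝ u w v) z :=
  ((hu.fderiv_right (m := 1) (by norm_num)).differentiableAt one_ne_zero).clm_apply
    (differentiableAt_const v)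

section LapAlg

variable {u h : ℂ → ℝ} {z : ℂ}

lemma dd_add (hu : ContDiffAt ℝ 2 u z) (hh : ContDiffAt ℝ 2 h z) (v : ℂ) :
    fderiv ℝ (fun w => fderiv ℝ (fun y => u y + h y) w v) z v
      = fderiv ℝ (fun w => fderiv ℝ u w v) z v + fderiv ℝ (fun w => fderiv ℝ h w v) z v := by
  have hev : (fun w => fderiv ℝ (fun y => u y + h y) w v)
      =ᶠ[𝓝 z] fun w => fderiv ℝ u w v + fderiv ℝ h w v := by
    filter_upwards [eventually_contDiffAt hu, eventually_contDiffAt hh] with w hw1 hw2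
    rw [fderiv_fun_add (hw1.differentiableAt two_ne_zero) (hw2.differentiableAt two_ne_zero)]
    rfl
  rw [hev.fderiv_eq, fderiv_fun_add (diff_fderiv_apply hu v) (diff_fderiv_apply hh v)]
  rfl

lemma dd_affine (hh : ContDiffAt ℝ 2 h z) (a b : ℝ) (v : ℂ) :
    fderiv ℝ (fun w => fderiv ℝ (fun y => a * h y + b) w v) z v
      = a * fderiv ℝ (fun w => fderiv ℝ h w v) z v := by
  have hev : (fun w => fderiv ℝ (fun y => a * h y + b) w v)
      =ᶠ[𝓝 z] fun w => a * fderiv ℝ h w v := by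
    filter_upwards [eventually_contDiffAt hh] with w hw
    have hd := hw.differentiableAt (n := 2) two_ne_zero
    rw [fderiv_add_const, fderiv_const_mul hd]
    simp
  rw [hev.fderiv_eq, fderiv_const_mul (diff_fderiv_apply hh v)]
  simp

lemma lap_add (hu : ContDiffAt ℝ 2 u z) (hh : ContDiffAt ℝ 2 h z) :
    Lap (fun w => u w + h w) z = Lap u z + Lap h z := by
  unfold Lap
  rw [dd_add hu hh, dd_add hu hh]; ring

lemma lap_affine (hh : ContDiffAt ℝ 2 h z) (a b : ℝ) :
    Lap (fun w => a * h w + b) z = a * Lap h z := by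
  unfold Lap
  rw [dd_affine hh, dd_affine hh]; ring

end LapAlg

lemma secondDeriv_nonpos_of_isLocalMax {g : ℝ → ℝ}
    (h1 : ∀ᶠ t in 𝓝 (0:ℝ), DifferentiableAt ℝ g t)
    (hmax : IsLocalMax g 0) :
    deriv (deriv g) 0 ≤ 0 := by
  by_contra hpos
  push_neg at hpos
  by_cases h2 : DifferentiableAt ℝ (deriv g) 0
  swap
  · rw [deriv_zero_of_not_differentiableAt h2] at hpos; exact lt_irrefl _ hpos
  have h0 : deriv g 0 = 0 := hmax.deriv_eq_zero
  have hd := h2.hasDerivAt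
  rw [hasDerivAt_iff_tendsto_slope] at hd
  have hev : ∀ᶠ t in 𝓝[≠] (0:ℝ), 0 < slope (deriv g) 0 t :=
    hd.eventually (eventually_gt_nhds hpos)
  obtain ⟨s1, hs1, hs1sub⟩ := hev.exists_mem
  obtain ⟨ε₂, hε₂, hball2⟩ := Metric.mem_nhdsWithin_iff.mp hs1
  obtain ⟨ε₁, hε₁, hball1⟩ := Metric.eventually_nhds_iff.mp h1
  set ε := min ε₁ ε₂ / 2 with hεdef
  have hεpos : 0 < ε := by positivity
  have hεsmall : ∀ t : ℝ, t ∈ Set.Icc 0 ε → dist t 0 < min ε₁ ε₂ := by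
    intro t ht
    rw [Real.dist_eq, sub_zero, abs_of_nonneg ht.1]
    calc t ≤ ε := ht.2
    _ < min ε₁ ε₂ := by rw [hεdef]; linarith [lt_min hε₁ hε₂]
  have hcont : ContinuousOn g (Set.Icc 0 ε) := by
    intro t ht
    exact (hball1 (lt_of_lt_of_le (hεsmall t ht) (min_le_left _ _))).continuousAt.continuousWithinAt
  have hderivpos : ∀ t ∈ interior (Set.Icc 0 ε), 0 < deriv g t := by
    intro t ht
    rw [interior_Icc] at ht
    have htne : t ∈ ({(0:ℝ)}ᶜ : Set ℝ) := by simp [ne_of_gt ht.1]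
    have hdist : dist t 0 < ε₂ :=
      lt_of_lt_of_le (hεsmall t ⟨le_of_lt ht.1, le_of_lt ht.2⟩) (min_le_right _ _)
    have := hs1sub t (hball2 ⟨Metric.mem_ball.mpr hdist, htne⟩)
    rw [slope_def_field, h0, sub_zero, sub_zero] at this
    have := mul_pos this ht.1
    rwa [div_mul_cancel₀ _ (ne_of_gt ht.1)] at this
  have hmono := strictMonoOn_of_deriv_pos (convex_Icc 0 ε) hcont hderivpos
  -- now get contradiction with local max
  obtain ⟨ε₃, hε₃, hballmax⟩ := Metric.eventually_nhds_iff.mp hmax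
  set t := min ε ε₃ / 2 with htdef
  have htpos : 0 < t := by positivity
  have htIcc : t ∈ Set.Icc 0 ε := by
    constructor
    · linarith
    · rw [htdef]; have := min_le_left ε ε₃; linarith
  have h1lt := hmono (Set.left_mem_Icc.mpr (le_of_lt hεpos)) htIcc htpos
  have h2le : g t ≤ g 0 := by
    apply hballmax
    rw [Real.dist_eq, sub_zero, abs_of_nonneg (le_of_lt htpos)]
    rw [htdef]; have := min_le_right ε ε₃; linarith
  linarith

lemma dirSecond_nonpos_of_isLocalMax {u : ℂ → ℝ} {z : ℂ}
    (hu : ContDiffAt ℝ 2 u z) (hmax : IsLocalMax u z) (v : ℂ) :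
    fderiv ℝ (fun w => fderiv ℝ u w v) z v ≤ 0 := by
  set φ : ℝ → ℂ := fun t => z + t • v with hφdef
  have hφc : Continuous φ := by continuity
  have hφ0 : φ 0 = z := by simp [hφdef]
  have hφd : ∀ t : ℝ, HasDerivAt φ v t := by
    intro t
    simpa [hφdef] using ((hasDerivAt_id t).smul_const v).const_add z
  set g : ℝ → ℝ := fun t => u (φ t) with hgdef
  -- eventual smoothness along the slice
  have hevul : ∀ᶠ t in 𝓝 (0:ℝ), ContDiffAt ℝ 2 u (φ t) := by
    have : Filter.Tendsto φ (𝓝 0) (𝓝 z) := by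
      rw [← hφ0]; exact hφc.continuousAt
    exact this.eventually (eventually_contDiffAt hu)
  have hgderiv : ∀ᶠ t in 𝓝 (0:ℝ), HasDerivAt g (fderiv ℝ u (φ t) v) t := by
    filter_upwards [hevul] with t ht
    have h1 := (ht.differentiableAt two_ne_zero).hasFDerivAt.comp_hasDerivAt t (hφd t)
    exact h1
  have hgdiff : ∀ᶠ t in 𝓝 (0:ℝ), DifferentiableAt ℝ g t := by
    filter_upwards [hgderiv] with t ht using ht.differentiableAt
  have hgd_eq : (deriv g) =ᶠ[𝓝 (0:ℝ)] fun t => fderiv ℝ u (φ t) v := by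
    filter_upwards [hgderiv] with t ht using ht.deriv
  -- second derivative of the slice
  have houter : HasDerivAt (fun t => fderiv ℝ u (φ t) v)
      (fderiv ℝ (fun w => fderiv ℝ u w v) z v) 0 := by
    have hF : DifferentiableAt ℝ (fun w => fderiv ℝ u w v) z := diff_fderiv_apply hu v
    have hF' : HasFDerivAt (fun w => fderiv ℝ u w v)
        (fderiv ℝ (fun w => fderiv ℝ u w v) z) (φ 0) := hφ0 ▸ hF.hasFDerivAt
    exact hF'.comp_hasDerivAt 0 (hφd 0)
  have hdd : deriv (deriv g) 0 = fderiv ℝ (fun w => fderiv ℝ u w v) z v := by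
    rw [Filter.EventuallyEq.deriv_eq hgd_eq]
    exact houter.deriv
  have hgmax : IsLocalMax g 0 := by
    have : Filter.Tendsto φ (𝓝 0) (𝓝 z) := by rw [← hφ0]; exact hφc.continuousAt
    have := this.eventually hmax
    filter_upwards [this] with t ht
    simpa [hgdef, hφ0] using ht
  rw [← hdd]
  exact secondDeriv_nonpos_of_isLocalMax hgdiff hgmax

lemma lap_nonpos_of_isLocalMax {u : ℂ → ℝ} {z : ℂ}
    (hu : ContDiffAt ℝ 2 u z) (hmax : IsLocalMax u z) : Lap u z ≤ 0 := by
  have h1 := dirSecond_nonpos_of_isLocalMax hu hmax 1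
  have h2 := dirSecond_nonpos_of_isLocalMax hu hmax Complex.I
  unfold Lap; linarith

noncomputable def pfun : ℂ → ℝ := fun z => z.re ^ 2

lemma pfun_contDiff : ContDiff ℝ 2 pfun := by
  have : ContDiff ℝ 2 (fun z : ℂ => z.re) := Complex.reCLM.contDiff
  exact this.pow 2

lemma pfun_fderiv (z : ℂ) : fderiv ℝ pfun z = (2 * z.re) • (Complex.reCLM : ℂ →L[ℝ] ℝ) := by
  have h : HasFDerivAt pfun ((2 * z.re) • (Complex.reCLM : ℂ →L[ℝ] ℝ)) z := by
    have h1 : HasFDerivAt (fun z : ℂ => z.re) (Complex.reCLM : ℂ →L[ℝ] ℝ) z :=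
      Complex.reCLM.hasFDerivAt
    have h2 : HasFDerivAt pfun (z.re • (Complex.reCLM : ℂ →L[ℝ] ℝ)
        + z.re • (Complex.reCLM : ℂ →L[ℝ] ℝ)) z := by
      have := h1.mul h1
      have hpe : pfun = fun z : ℂ => z.re * z.re := by funext w; simp [pfun, pow_two]
      rw [hpe]
      exact this
    rw [two_mul, add_smul]
    exact h2
  exact h.fderiv

lemma pfun_lap (z : ℂ) : Lap pfun z = 2 := by
  have h1 : (fun w => fderiv ℝ pfun w 1) = fun w : ℂ => 2 * w.re := by
    funext w; rw [pfun_fderiv]; simp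
  have h2 : (fun w => fderiv ℝ pfun w Complex.I) = fun _ : ℂ => (0:ℝ) := by
    funext w; rw [pfun_fderiv]; simp
  unfold Lap
  rw [h1, h2]
  have h3 : HasFDerivAt (fun w : ℂ => 2 * w.re) ((2:ℝ) • (Complex.reCLM : ℂ →L[ℝ] ℝ)) z := by
    exact (Complex.reCLM.hasFDerivAt).const_mul (2:ℝ)
  rw [h3.fderiv, fderiv_const_apply]
  simp

lemma max_principle {s : Set ℂ} (hs : IsCompact s) {u : ℂ → ℝ}
    (hc : ContinuousOn u s)
    (hu : ∀ z ∈ interior s, ContDiffAt ℝ 2 u z)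
    (hlap : ∀ z ∈ interior s, 0 ≤ Lap u z)
    (hb : ∀ z ∈ frontier s, u z ≤ 0) :
    ∀ z ∈ s, u z ≤ 0 := by
  intro z₀ hz₀
  -- bound for pfun on s
  obtain ⟨P, hP⟩ := (hs.image_of_continuousOn (pfun_contDiff.continuous.continuousOn)).bddAbove
  have hPz : ∀ w ∈ s, pfun w ≤ P := fun w hw => hP (Set.mem_image_of_mem _ hw)
  have hP0 : 0 ≤ P := le_trans (by unfold pfun; positivity) (hPz z₀ hz₀)
  have key : ∀ δ : ℝ, 0 < δ → u z₀ ≤ δ * P := by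
    intro δ hδ
    set uδ : ℂ → ℝ := fun w => u w + δ * pfun w with huδdef
    have hcδ : ContinuousOn uδ s :=
      hc.add ((pfun_contDiff.continuous.continuousOn).const_smul δ)
    obtain ⟨m, hms, hmax⟩ := hs.exists_isMaxOn ⟨z₀, hz₀⟩ hcδ
    have hmaxval : ∀ w ∈ s, uδ w ≤ uδ m := fun w hw => hmax hw
    by_cases hmi : m ∈ interior s
    · exfalso
      have hloc : IsLocalMax uδ m := by
        filter_upwards [mem_interior_iff_mem_nhds.mp hmi] with w hw
        exact hmaxval w hw
      have hcd : ContDiffAt ℝ 2 uδ m :=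
        (hu m hmi).add ((pfun_contDiff.contDiffAt).const_smul δ)
      have hle := lap_nonpos_of_isLocalMax hcd hloc
      have heq : Lap uδ m = Lap u m + δ * Lap pfun m := by
        have := lap_add (hu m hmi) (h := fun w => δ * pfun w + 0)
          ((pfun_contDiff.contDiffAt.const_smul δ).add contDiffAt_const)
        have h2 := lap_affine (z := m) pfun_contDiff.contDiffAt δ 0
        calc Lap uδ m = Lap (fun w => u w + (δ * pfun w + 0)) m := by
              unfold uδ; congr 1; funext w; ring
        _ = Lap u m + Lap (fun w => δ * pfun w + 0) m := this
        _ = Lap u m + δ * Lap pfun m := by rw [h2]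
      rw [heq, pfun_lap] at hle
      have := hlap m hmi
      linarith
    · have hmf : m ∈ frontier s := by
        rw [frontier, hs.isClosed.closure_eq]
        exact ⟨hms, hmi⟩
      have h1 : uδ z₀ ≤ uδ m := hmaxval z₀ hz₀
      have h2 : u m ≤ 0 := hb m hmf
      have h3 : pfun m ≤ P := hPz m hms
      have h4 : 0 ≤ pfun z₀ := by unfold pfun; positivity
      simp only [huδdef] at h1
      nlinarith
  by_contra hcon
  push_neg at hcon
  rcases eq_or_lt_of_le hP0 with hP0' | hP0'
  · have := key 1 one_pos; rw [← hP0'] at this; linarith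
  · have := key (u z₀ / (2 * P)) (by positivity)
    have heq : (u z₀ / (2*P)) * P = u z₀ / 2 := by field_simp
    rw [heq] at this
    linarith

lemma re_fderiv_eq {h : ℂ → ℂ} {w : ℂ} (hw : DifferentiableAt ℂ h w) (v : ℂ) :
    fderiv ℝ (fun y => (h y).re) w v = (deriv h w * v).re := by
  have h1 : HasFDerivAt (fun y => (h y).re)
      ((Complex.reCLM : ℂ →L[ℝ] ℝ).comp ((fderiv ℂ h w).restrictScalars ℝ)) w :=
    Complex.reCLM.hasFDerivAt.comp w (hw.hasFDerivAt.restrictScalars ℝ)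
  rw [h1.fderiv]
  have h2 : (fderiv ℂ h w) v = v • deriv h w := fderiv_eq_smul_deriv v
  simp [h2, mul_comm]

lemma AnalyticAt.deriv' {h : ℂ → ℂ} {z : ℂ} (hh : AnalyticAt ℂ h z) :
    AnalyticAt ℂ (deriv h) z := by
  have h1 := hh.fderiv
  have h2 : deriv h = fun w => fderiv ℂ h w 1 := by
    funext w; rw [fderiv_apply_one_eq_deriv]
  rw [h2]
  exact ((ContinuousLinearMap.apply ℂ ℂ (1:ℂ)).analyticAt _).comp h1

lemma re_analytic_lap {h : ℂ → ℂ} {z : ℂ} (hh : AnalyticAt ℂ h z) :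
    ContDiffAt ℝ 2 (fun y => (h y).re) z ∧ Lap (fun y => (h y).re) z = 0 := by
  have hd2 : ContDiffAt ℝ 2 (fun y => (h y).re) z := by
    have : ContDiffAt ℂ 2 h z := hh.contDiffAt
    exact (Complex.reCLM.contDiff.contDiffAt).comp z (this.restrict_scalars ℝ)
  refine ⟨hd2, ?_⟩
  have hev : ∀ᶠ w in 𝓝 z, AnalyticAt ℂ h w := hh.eventually_analyticAt
  have hkey : ∀ v : ℂ, fderiv ℝ (fun w => fderiv ℝ (fun y => (h y).re) w v) z v
      = (deriv (deriv h) z * v * v).re := by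
    intro v
    have heq : (fun w => fderiv ℝ (fun y => (h y).re) w v)
        =ᶠ[𝓝 z] fun w => ((deriv h w * v)).re := by
      filter_upwards [hev] with w hw
      exact re_fderiv_eq hw.differentiableAt v
    rw [heq.fderiv_eq]
    have hg : DifferentiableAt ℂ (fun w => deriv h w * v) z :=
      (hh.deriv'.differentiableAt).mul_const v
    rw [re_fderiv_eq hg v]
    congr 2
    rw [deriv_mul_const (hh.deriv'.differentiableAt)]
  unfold Lap
  rw [hkey 1, hkey Complex.I]
  have : deriv (deriv h) z * Complex.I * Complex.I = - (deriv (deriv h) z) := by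
    rw [mul_assoc, Complex.I_mul_I]; ring
  rw [this]
  simp

lemma logabs_lap {z₀ z : ℂ} (hz : z ≠ z₀) :
    ContDiffAt ℝ 2 (fun w => Real.log (‖w - z₀‖)) z ∧
      Lap (fun w => Real.log (‖w - z₀‖)) z = 0 := by
  by_cases hslit : z - z₀ ∈ Complex.slitPlane
  · have hfun : (fun w => Real.log (‖w - z₀‖))
        = fun w => (Complex.log (w - z₀)).re := by
      funext w; rw [Complex.log_re]
    rw [hfun]
    have hana : AnalyticAt ℂ (fun w => Complex.log (w - z₀)) z :=
      AnalyticAt.clog (analyticAt_id.sub analyticAt_const) hslit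
    exact re_analytic_lap hana
  · have hfun : (fun w => Real.log (‖w - z₀‖))
        = fun w => (Complex.log (z₀ - w)).re := by
      funext w; rw [Complex.log_re, norm_sub_rev]
    rw [hfun]
    have hslit' : z₀ - z ∈ Complex.slitPlane := by
      rw [Complex.mem_slitPlane_iff] at hslit ⊢
      push_neg at hslit
      obtain ⟨hre, him⟩ := hslit
      have hne : z - z₀ ≠ 0 := sub_ne_zero.mpr hz
      have hrelt : (z - z₀).re < 0 := by
        rcases lt_or_eq_of_le hre with h | h
        · exact h
        · exfalso; apply hne; apply Complex.ext <;> simp [h.symm, him]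
      left
      simpa using neg_pos.mpr hrelt
    have hana : AnalyticAt ℂ (fun w => Complex.log (z₀ - w)) z :=
      AnalyticAt.clog (analyticAt_const.sub analyticAt_id) hslit'
    exact re_analytic_lap hana

lemma subharmonic_bounded_le {u : ℂ → ℝ}
    (hu : ∀ z, ContDiffAt ℝ 2 u z) (hl : ∀ z, 0 ≤ Lap u z)
    {M : ℝ} (hM : ∀ z, u z ≤ M) (z₀ z₁ : ℂ) : u z₁ ≤ u z₀ := by
  rcases eq_or_ne z₁ z₀ with rfl | hne
  · exact le_rfl
  set L : ℂ → ℝ := fun w => Real.log (‖w - z₀‖) with hLdef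
  set d := ‖z₁ - z₀‖ with hddef
  have hd : 0 < d := norm_pos_iff.mpr (sub_ne_zero.mpr hne)
  suffices H : ∀ ε > 0, u z₁ ≤ u z₀ + ε by
    by_contra hc; push_neg at hc
    have := H ((u z₁ - u z₀)/2) (by linarith); linarith
  intro ε hε
  have hcont : Filter.Tendsto u (𝓝 z₀) (𝓝 (u z₀)) := (hu z₀).continuousAt
  have hev : ∀ᶠ w in 𝓝 z₀, u w < u z₀ + ε :=
    hcont.eventually (eventually_lt_nhds (by linarith : u z₀ < u z₀ + ε))
  obtain ⟨σ₀, hσ₀, hballσ⟩ := Metric.eventually_nhds_iff.mp hev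
  set σ := min (σ₀/2) (d/2) with hσdef
  have hσpos : 0 < σ := by positivity
  have hσσ₀ : σ < σ₀ := lt_of_le_of_lt (min_le_left _ _) (by linarith)
  have hσd : σ < d := lt_of_le_of_lt (min_le_right _ _) (by linarith)
  set s := u z₀ + ε with hsdef
  set M' := max M s with hM'def
  have hM' : ∀ z, u z ≤ M' := fun z => le_trans (hM z) (le_max_left _ _)
  have hM's : s ≤ M' := le_max_right _ _
  suffices H2 : ∀ η > 0, u z₁ ≤ s + η by
    by_contra hc; push_neg at hc
    have := H2 ((u z₁ - s)/2) (by linarith); linarith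
  intro η hη
  set K := (M' - s) * (Real.log d - Real.log σ) with hKdef
  have hlogdσ : Real.log σ < Real.log d := Real.log_lt_log hσpos hσd
  have hK0 : 0 ≤ K := mul_nonneg (by linarith) (by linarith)
  set R := max (d+1) (σ * Real.exp (K/η + 1)) with hRdef
  have hRd : d < R := lt_of_lt_of_le (lt_add_one d) (le_max_left _ _)
  have hR0 : 0 < R := lt_trans hd hRd
  have hlogR : Real.log σ + (K/η + 1) ≤ Real.log R := by
    have h1 : Real.log (σ * Real.exp (K/η+1)) = Real.log σ + (K/η+1) := by
      rw [Real.log_mul (ne_of_gt hσpos) (Real.exp_ne_zero _), Real.log_exp]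
    rw [← h1]
    exact Real.log_le_log (by positivity) (le_max_right _ _)
  set D := Real.log R - Real.log σ with hDdef
  have hD1 : K/η + 1 ≤ D := by rw [hDdef]; linarith
  have hD0 : 0 < D := lt_of_lt_of_le (by positivity) hD1
  set c := (M' - s) / D with hcdef
  have hc0 : 0 ≤ c := div_nonneg (by linarith) (le_of_lt hD0)
  set b := c * Real.log σ - s with hbdef
  set g : ℂ → ℝ := fun w => (-c) * L w + b with hgdef
  set v : ℂ → ℝ := fun w => u w + g w with hvdef
  set A := Metric.closedBall z₀ R \ Metric.ball z₀ σ with hAdef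
  have hAcomp : IsCompact A := (isCompact_closedBall z₀ R).diff Metric.isOpen_ball
  have hAclosed : IsClosed A :=
    Metric.isClosed_closedBall.inter (Metric.isOpen_ball).isClosed_compl
  have hint : interior A = Metric.ball z₀ R \ Metric.closedBall z₀ σ := by
    rw [hAdef, Set.diff_eq, Set.diff_eq, interior_inter, interior_compl,
      interior_closedBall z₀ (ne_of_gt hR0), closure_ball z₀ (ne_of_gt hσpos)]
  have hint_ne : ∀ z ∈ interior A, z ≠ z₀ := by
    intro z hz
    rw [hint] at hz
    intro hzz
    apply hz.2
    rw [hzz]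
    exact Metric.mem_closedBall_self (le_of_lt hσpos)
  have hgC2 : ∀ z : ℂ, z ≠ z₀ → ContDiffAt ℝ 2 g z := by
    intro z hz
    exact (contDiffAt_const.mul (logabs_lap hz).1).add contDiffAt_const
  -- v is continuous on A
  have hone : ∀ z : ℂ, z ∈ A → z ≠ z₀ := by
    intro z hz hzz
    apply hz.2
    rw [hzz]
    exact Metric.mem_ball_self hσpos
  have hcontv : ContinuousOn v A := by
    intro w hw
    have h1 : ContinuousAt v w := by
      have := ((hu w).add (hgC2 w (hone w hw))).continuousAt
      exact this
    exact h1.continuousWithinAt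
  -- Laplacian of v is nonneg on interior
  have hvC2 : ∀ z ∈ interior A, ContDiffAt ℝ 2 v z := by
    intro z hz
    exact (hu z).add (hgC2 z (hint_ne z hz))
  have hvlap : ∀ z ∈ interior A, 0 ≤ Lap v z := by
    intro z hz
    have hlog := logabs_lap (hint_ne z hz)
    have h1 : Lap v z = Lap u z + Lap g z := lap_add (hu z) (hgC2 z (hint_ne z hz))
    have h2 : Lap g z = (-c) * Lap L z := lap_affine hlog.1 (-c) b
    rw [h1, h2, hlog.2]
    have := hl z
    linarith
  -- boundary bound
  have hfront : ∀ z ∈ frontier A, v z ≤ 0 := by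
    intro w hw
    rw [frontier, hAclosed.closure_eq] at hw
    obtain ⟨hwA, hwi⟩ := hw
    rw [hint] at hwi
    have hw1 : dist w z₀ ≤ R := Metric.mem_closedBall.mp hwA.1
    have hw2 : σ ≤ dist w z₀ := not_lt.mp (fun hcon => hwA.2 (Metric.mem_ball.mpr hcon))
    have habs : ‖w - z₀‖ = dist w z₀ := by
      rw [Complex.dist_eq]
    have hcases : dist w z₀ = σ ∨ dist w z₀ = R := by
      by_contra hno
      push_neg at hno
      apply hwi
      refine ⟨Metric.mem_ball.mpr (lt_of_le_of_ne hw1 hno.2), fun hmem => ?_⟩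
      exact hno.1 (le_antisymm (Metric.mem_closedBall.mp hmem) hw2)
    rcases hcases with hcase | hcase
    · have hLw : L w = Real.log σ := by rw [hLdef]; simp only []; rw [habs, hcase]
      have hub : u w < s := by
        rw [hsdef]
        exact hballσ (by rw [hcase]; exact hσσ₀)
      have : v w = u w - s := by
        rw [hvdef]; simp only [hgdef, hbdef]; rw [hLw]; ring
      rw [this]; linarith
    · have hLw : L w = Real.log R := by rw [hLdef]; simp only []; rw [habs, hcase]
      have hcD : c * D = M' - s := div_mul_cancel₀ _ (ne_of_gt hD0)
      have : v w = u w - M' := by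
        rw [hvdef]; simp only [hgdef, hbdef]; rw [hLw]
        rw [hDdef] at hcD
        linarith [hcD]
      rw [this]
      linarith [hM' w]
  -- apply the maximum principle
  have hz₁A : z₁ ∈ A := by
    constructor
    · exact Metric.mem_closedBall.mpr (by rw [Complex.dist_eq, ← hddef]; linarith)
    · intro hcon
      rw [Metric.mem_ball, Complex.dist_eq, ← hddef] at hcon
      linarith
  have hv1 := max_principle hAcomp hcontv hvC2 hvlap hfront z₁ hz₁A
  have hL1 : L z₁ = Real.log d := by rw [hLdef]
  have hexp : u z₁ ≤ s + c * (Real.log d - Real.log σ) := by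
    rw [hvdef] at hv1; simp only [hgdef, hbdef] at hv1
    rw [hL1] at hv1; linarith
  have hKD : c * (Real.log d - Real.log σ) = K / D := by
    rw [hcdef, hKdef]; ring
  have hfin : K / D ≤ η := by
    have h1 : K / D ≤ K / (K/η + 1) :=
      div_le_div_of_nonneg_left hK0 (by positivity) hD1
    have h2 : K / (K/η + 1) ≤ η := by
      rw [div_le_iff₀ (by positivity)]
      have : η * (K/η + 1) = K + η := by field_simp
      rw [this]; linarith
    linarith
  rw [hKD] at hexp
  linarith

section Chain

variable {n : ℕ} {ρ : EuclideanSpace ℝ (Fin n) → ℝ} {x : EuclideanSpace ℝ (Fin n)}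

lemma hess_eq (hρ : ContDiffAt ℝ 2 ρ x) (a b : EuclideanSpace ℝ (Fin n)) :
    Hess ρ x a b = (fderiv ℝ (fderiv ℝ ρ) x b) a := by
  unfold Hess
  have hd : DifferentiableAt ℝ (fderiv ℝ ρ) x :=
    (hρ.fderiv_right (m := 1) (by norm_num)).differentiableAt one_ne_zero
  rw [fderiv_clm_apply hd (differentiableAt_const a), fderiv_const_apply]
  simp

lemma second_dir_comp {f : ℂ → EuclideanSpace ℝ (Fin n)} (hf : ContDiff ℝ 2 f)
    {z : ℂ} (hρ : ContDiffAt ℝ 2 ρ (f z)) (v : ℂ) :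
    fderiv ℝ (fun w => fderiv ℝ (fun y => ρ (f y)) w v) z v
      = fderiv ℝ ρ (f z) (fderiv ℝ (fun w => fderiv ℝ f w v) z v)
        + Hess ρ (f z) (fderiv ℝ f z v) (fderiv ℝ f z v) := by
  have hfd : Differentiable ℝ f := hf.differentiable two_ne_zero
  have hev : ∀ᶠ w in 𝓝 z, ContDiffAt ℝ 2 ρ (f w) :=
    (hf.continuous.continuousAt).eventually (eventually_contDiffAt hρ)
  have heq : (fun w => fderiv ℝ (fun y => ρ (f y)) w v)
      =ᶠ[𝓝 z] fun w => fderiv ℝ ρ (f w) (fderiv ℝ f w v) := by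
    filter_upwards [hev] with w hw
    have := fderiv_comp w (hw.differentiableAt two_ne_zero) (hfd w)
    simp only [← Function.comp_def]
    rw [this]
    rfl
  rw [heq.fderiv_eq]
  have h1 : DifferentiableAt ℝ (fderiv ℝ ρ) (f z) :=
    (hρ.fderiv_right (m := 1) (by norm_num)).differentiableAt one_ne_zero
  have hG : DifferentiableAt ℝ (fun w => fderiv ℝ ρ (f w)) z := by
    have := h1.comp z (hfd z)
    simpa [Function.comp_def] using this
  have hH : DifferentiableAt ℝ (fun w => fderiv ℝ f w v) z :=
    diff_fderiv_apply hf.contDiffAt v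
  rw [fderiv_clm_apply hG hH]
  simp only [ContinuousLinearMap.add_apply, ContinuousLinearMap.coe_comp',
    Function.comp_apply, ContinuousLinearMap.flip_apply]
  congr 1
  have hchain : fderiv ℝ (fun w => fderiv ℝ ρ (f w)) z
      = ((fderiv ℝ (fderiv ℝ ρ) (f z)).comp (fderiv ℝ f z)) := by
    have := fderiv_comp z h1 (hfd z)
    simp only [← Function.comp_def]
    rw [this]
  rw [hchain, hess_eq hρ]
  rfl

lemma hess_smul (hρ : ContDiffAt ℝ 2 ρ x) (c : ℝ) (a : EuclideanSpace ℝ (Fin n)) :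
    Hess ρ x (c • a) (c • a) = c^2 * Hess ρ x a a := by
  simp only [hess_eq hρ, map_smul, ContinuousLinearMap.smul_apply, smul_eq_mul]
  ring

lemma trace_nonneg {Ω : Set (EuclideanSpace ℝ (Fin n))}
    (hpsh : Is2PSH ρ Ω) (hx : x ∈ Ω) (hρ : ContDiffAt ℝ 2 ρ x)
    (a b : EuclideanSpace ℝ (Fin n)) (hab : ⟪a, b⟫ = 0) (hnorm : ‖a‖ = ‖b‖) :
    0 ≤ Hess ρ x a a + Hess ρ x b b := by
  rcases eq_or_ne a 0 with rfl | ha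
  · have hb : b = 0 := by
      rw [← norm_eq_zero, ← hnorm, norm_zero]
    subst hb
    simp only [hess_eq hρ, map_zero]
    simp
  · have hna : 0 < ‖a‖ := norm_pos_iff.mpr ha
    set c := ‖a‖⁻¹ with hcdef
    have hc : 0 < c := by positivity
    set v : Fin 2 → EuclideanSpace ℝ (Fin n) := ![c • a, c • b] with hvdef
    have hnb : 0 < ‖b‖ := hnorm ▸ hna
    have hba : ⟪b, a⟫ = 0 := by rw [real_inner_comm]; exact hab
    have hortho : Orthonormal ℝ v := by
      rw [orthonormal_iff_ite]
      intro i j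
      fin_cases i <;> fin_cases j <;>
        simp only [hvdef, hcdef, Fin.mk_zero, Fin.mk_one, Matrix.cons_val_zero,
          Matrix.cons_val_one, Matrix.head_cons, Fin.isValue]
      · rw [if_pos trivial, real_inner_smul_left, real_inner_smul_right,
          real_inner_self_eq_norm_mul_norm]
        field_simp
      · rw [if_neg (by simp), real_inner_smul_left, real_inner_smul_right, hab]; ring
      · rw [if_neg (by simp), real_inner_smul_left, real_inner_smul_right, hba]; ring
      · rw [if_pos trivial, real_inner_smul_left, real_inner_smul_right,
          real_inner_self_eq_norm_mul_norm, hnorm]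
        field_simp
    have := hpsh x hx v hortho
    rw [Fin.sum_univ_two] at this
    simp only [hvdef, Matrix.cons_val_zero, Matrix.cons_val_one, Matrix.head_cons] at this
    rw [hess_smul hρ, hess_smul hρ] at this
    have hc2 : 0 < c^2 := by positivity
    nlinarith

end Chain

/-- Let `Ω ⊆ ℝⁿ` be open and `ρ : Ω → ℝ` a `C²`
`2`-plurisubharmonic function which is bounded above on `Ω`. Then for every conformal
harmonic map `f : ℂ → ℝⁿ` with image in `Ω`, the composition `ρ ∘ f` is constant. -/
theorem bounded_2psh_comp_conformalHarmonic_constant {n : ℕ}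
    (Ω : Set (EuclideanSpace ℝ (Fin n))) (hΩ : IsOpen Ω)
    (ρ : EuclideanSpace ℝ (Fin n) → ℝ) (hρ : ContDiffOn ℝ 2 ρ Ω)
    (hpsh : Is2PSH ρ Ω) (hbd : ∃ C : ℝ, ∀ x ∈ Ω, ρ x ≤ C)
    (f : ℂ → EuclideanSpace ℝ (Fin n)) (hf : ConformalHarmonic f)
    (hrange : ∀ z : ℂ, f z ∈ Ω) :
    ∀ z w : ℂ, ρ (f z) = ρ (f w) := by
  obtain ⟨C, hC⟩ := hbd
  obtain ⟨hfC2, hconf, hharm⟩ := hf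
  have hρat : ∀ z : ℂ, ContDiffAt ℝ 2 ρ (f z) := fun z =>
    hρ.contDiffAt (hΩ.mem_nhds (hrange z))
  have hu : ∀ z : ℂ, ContDiffAt ℝ 2 (fun y => ρ (f y)) z := by
    intro z
    have := (hρat z).comp z hfC2.contDiffAt
    simpa [Function.comp_def] using this
  have hlap : ∀ z : ℂ, 0 ≤ Lap (fun y => ρ (f y)) z := by
    intro z
    have h1 := second_dir_comp hfC2 (hρat z) 1
    have hI := second_dir_comp hfC2 (hρat z) Complex.I
    have hsum : fderiv ℝ ρ (f z) (fderiv ℝ (fun w => fderiv ℝ f w 1) z 1)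
        + fderiv ℝ ρ (f z) (fderiv ℝ (fun w => fderiv ℝ f w Complex.I) z Complex.I) = 0 := by
      rw [← map_add, hharm z, map_zero]
    have htr := trace_nonneg hpsh (hrange z) (hρat z) _ _ (hconf z).1 (hconf z).2
    unfold Lap
    rw [h1, hI]
    linarith
  have hbdd : ∀ z : ℂ, (fun y => ρ (f y)) z ≤ C := fun z => hC (f z) (hrange z)
  intro z w
  exact le_antisymm (subharmonic_bounded_le hu hlap hbdd w z)
    (subharmonic_bounded_le hu hlap hbdd z w)
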